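/- Let Σ₁, Σ₂ be positive definite d×d matrices and T = Σ₁^{-1/2} (Σ₁^{1/2} Σ₂ Σ₁^{1/2})^{1/2} Σ₁^{-1/2}. If X ∼ N(m₁, Σ₁), then E‖T X + t − X‖² = ‖m₂ − m₁‖² + Trace(Σ₁ + Σ₂ − 2 (Σ₁^{1/2} Σ₂ Σ₁^{1/2})^{1/2}), where t = m₂ − T m₁. That is, the affine optimal coupling attains the Gelbrich bound. -/

import Mathlib

open MeasureTheory Matrix Real

open Classical in
noncomputable def msqrt {d : ℕ} (A : Matrix (Fin d) (Fin d) ℝ) : Matrix (Fin d) (Fin d) ℝ :=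
  if h : A.PosSemidef then (h.1.eigenvectorUnitary : Matrix (Fin d) (Fin d) ℝ) *
    diagonal (Real.sqrt ∘ h.1.eigenvalues) * (star h.1.eigenvectorUnitary : Matrix (Fin d) (Fin d) ℝ)
    else 0

noncomputable def gaussianPdf {ι : Type*} [Fintype ι] [DecidableEq ι]
    (m : EuclideanSpace ℝ ι) (S : Matrix ι ι ℝ) (x : EuclideanSpace ℝ ι) : ℝ :=
  Real.sqrt (((2 * Real.pi) ^ (Fintype.card ι) * S.det)⁻¹) *
    Real.exp (-(1 / 2) * ∑ i, ∑ j, (x i - m i) * S⁻¹ i j * (x j - m j))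

noncomputable def gaussian {ι : Type*} [Fintype ι] [DecidableEq ι]
    (m : EuclideanSpace ℝ ι) (S : Matrix ι ι ℝ) : Measure (EuclideanSpace ℝ ι) :=
  volume.withDensity fun x => ENNReal.ofReal (gaussianPdf m S x)

noncomputable def KLdiv {ι : Type*} [Fintype ι]
    (α β : Measure (EuclideanSpace ℝ ι)) : ℝ :=
  (∫ x, Real.log ((α.rnDeriv β x).toReal) ∂α) - (β Set.univ).toReal + (α Set.univ).toReal


/-- The identity map regarding a plain vector as a point of Euclidean space. -/
noncomputable def toEuc {ι : Type*} [Fintype ι] (v : ι → ℝ) : EuclideanSpace ℝ ι :=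
  (WithLp.equiv 2 (ι → ℝ)).symm v


noncomputable def Matrix.PosSemidef.sqrt {d : ℕ} {A : Matrix (Fin d) (Fin d) ℝ} (h : A.PosSemidef) :
    Matrix (Fin d) (Fin d) ℝ :=
  (h.1.eigenvectorUnitary : Matrix (Fin d) (Fin d) ℝ) *
    diagonal (Real.sqrt ∘ h.1.eigenvalues) * (star h.1.eigenvectorUnitary : Matrix (Fin d) (Fin d) ℝ)

lemma Matrix.PosSemidef.posSemidef_sqrt {d : ℕ} {A : Matrix (Fin d) (Fin d) ℝ} (h : A.PosSemidef) :
    h.sqrt.PosSemidef := by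
  unfold Matrix.PosSemidef.sqrt
  have hD : (diagonal (Real.sqrt ∘ h.1.eigenvalues)).PosSemidef :=
    Matrix.posSemidef_diagonal_iff.2 fun i => Real.sqrt_nonneg _
  have := hD.mul_mul_conjTranspose_same (h.1.eigenvectorUnitary : Matrix (Fin d) (Fin d) ℝ)
  simpa [Matrix.star_eq_conjTranspose] using this

lemma Matrix.PosSemidef.sqrt_mul_self {d : ℕ} {A : Matrix (Fin d) (Fin d) ℝ} (h : A.PosSemidef) :
    h.sqrt * h.sqrt = A := by
  unfold Matrix.PosSemidef.sqrt
  have hU : (star h.1.eigenvectorUnitary : Matrix (Fin d) (Fin d) ℝ) *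
      (h.1.eigenvectorUnitary : Matrix (Fin d) (Fin d) ℝ) = 1 := Unitary.coe_star_mul_self _
  have hDD : diagonal (Real.sqrt ∘ h.1.eigenvalues) * diagonal (Real.sqrt ∘ h.1.eigenvalues)
      = diagonal (RCLike.ofReal ∘ h.1.eigenvalues) := by
    rw [diagonal_mul_diagonal]
    congr 1
    funext i
    simp [Real.mul_self_sqrt (h.eigenvalues_nonneg i)]
  conv_rhs => rw [h.1.spectral_theorem]
  rw [Unitary.conjStarAlgAut_apply, ← hDD]
  simp only [Matrix.mul_assoc]
  rw [← Matrix.mul_assoc (star _ : Matrix (Fin d) (Fin d) ℝ) (h.1.eigenvectorUnitary : Matrix (Fin d) (Fin d) ℝ), hU, Matrix.one_mul]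

noncomputable def g1 (y : ℝ) : ℝ := Real.exp (-(1/2 : ℝ) * y ^ 2)

lemma g1_pos (y : ℝ) : 0 < g1 y := Real.exp_pos _

lemma integrable_g1 : Integrable g1 := integrable_exp_neg_mul_sq (by norm_num)

lemma integral_g1 : ∫ x : ℝ, g1 x = Real.sqrt (2 * π) := by
  show (∫ x : ℝ, Real.exp (-(1/2 : ℝ) * x ^ 2)) = _
  rw [integral_gaussian]
  congr 1
  ring

lemma integrable_xg1 : Integrable (fun x : ℝ => x * g1 x) :=
  integrable_mul_exp_neg_mul_sq (by norm_num)

lemma integrable_x2g1 : Integrable (fun x : ℝ => x ^ 2 * g1 x) := by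
  have h := integrable_rpow_mul_exp_neg_mul_sq (b := 1/2) (by norm_num) (s := 2) (by norm_num)
  have : ∀ x : ℝ, x ^ (2 : ℝ) * Real.exp (-(1/2 : ℝ) * x ^ 2) = x ^ 2 * g1 x := by
    intro x
    rw [show (2:ℝ) = ((2:ℕ):ℝ) by norm_num, Real.rpow_natCast]
    rfl
  simp only [this] at h
  exact h

lemma hasDerivAt_g1 (x : ℝ) : HasDerivAt g1 (-x * g1 x) x := by
  have h1 : HasDerivAt (fun y : ℝ => -(1/2 : ℝ) * y ^ 2) (-(1/2 : ℝ) * (2 * x ^ 1)) x :=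
    (hasDerivAt_pow 2 x).const_mul _
  have h2 := h1.exp
  exact h2.congr_deriv (by simp only [g1]; ring)

lemma integral_xg1 : (∫ x : ℝ, x * g1 x) = 0 := by
  have hderiv : ∀ x : ℝ, HasDerivAt (fun y : ℝ => -g1 y) (x * g1 x) x := by
    intro x
    have := (hasDerivAt_g1 x).neg
    exact this.congr_deriv (by ring)
  exact integral_eq_zero_of_hasDerivAt_of_integrable hderiv integrable_xg1 integrable_g1.neg

lemma integral_x2g1 : (∫ x : ℝ, x ^ 2 * g1 x) = Real.sqrt (2 * π) := by
  have hderiv : ∀ x : ℝ, HasDerivAt (fun y : ℝ => -y * g1 y)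
      (x ^ 2 * g1 x - g1 x) x := by
    intro x
    have h := (hasDerivAt_neg x).mul (hasDerivAt_g1 x)
    exact h.congr_deriv (by ring)
  have hint : Integrable (fun x : ℝ => x ^ 2 * g1 x - g1 x) :=
    integrable_x2g1.sub integrable_g1
  have hf : Integrable (fun x : ℝ => -x * g1 x) := by
    have h := integrable_xg1.neg
    apply h.congr
    filter_upwards with x
    simp [neg_mul]
  have h0 := integral_eq_zero_of_hasDerivAt_of_integrable hderiv hint hf
  rw [integral_sub integrable_x2g1 integrable_g1, sub_eq_zero] at h0
  rw [h0, integral_g1]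
section Pi
variable {d : ℕ}

noncomputable def GG {d : ℕ} (z : Fin d → ℝ) : ℝ := ∏ i, g1 (z i)

lemma integrable_GG : Integrable (GG (d := d)) :=
  Integrable.fintype_prod (f := fun _ : Fin d => g1) (fun _ => integrable_g1)

lemma integral_GG : ∫ z : Fin d → ℝ, GG z = Real.sqrt (2 * π) ^ d := by
  rw [show (fun z : Fin d → ℝ => GG z) = fun z => ∏ i, g1 (z i) from rfl]
  rw [MeasureTheory.integral_fintype_prod_volume_eq_pow g1, integral_g1]
  simp

/-- first-moment factorized form -/
lemma mom1_eq (j : Fin d) (z : Fin d → ℝ) :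
    z j * GG z = ∏ i, (if i = j then (fun y => y * g1 y) else g1) (z i) := by
  rw [GG, ← Finset.mul_prod_erase Finset.univ _ (Finset.mem_univ j),
    ← Finset.mul_prod_erase Finset.univ _ (Finset.mem_univ j), ← mul_assoc]
  simp only [if_pos rfl]
  congr 1
  refine Finset.prod_congr rfl fun i hi => ?_
  rw [if_neg (Finset.ne_of_mem_erase hi)]

lemma integrable_mom1 (j : Fin d) : Integrable (fun z : Fin d → ℝ => z j * GG z) := by
  simp only [mom1_eq j]
  exact Integrable.fintype_prod fun i => by
    by_cases h : i = j <;> simp [h, integrable_xg1, integrable_g1]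

lemma integral_mom1 (j : Fin d) : (∫ z : Fin d → ℝ, z j * GG z) = 0 := by
  simp only [mom1_eq j]
  rw [MeasureTheory.integral_fintype_prod_volume_eq_prod]
  exact Finset.prod_eq_zero (Finset.mem_univ j) (by simp [integral_xg1])

/-- second-moment factorized form, distinct indices -/
lemma mom2_eq_ne (j k : Fin d) (hjk : j ≠ k) (z : Fin d → ℝ) :
    z j * z k * GG z =
      ∏ i, (if i = j then (fun y => y * g1 y) else if i = k then (fun y => y * g1 y) else g1)
        (z i) := by
  have hkj : k ∈ Finset.univ.erase j := Finset.mem_erase.2 ⟨(Ne.symm hjk), Finset.mem_univ k⟩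
  rw [GG, ← Finset.mul_prod_erase Finset.univ _ (Finset.mem_univ j),
    ← Finset.mul_prod_erase _ _ hkj,
    ← Finset.mul_prod_erase Finset.univ _ (Finset.mem_univ j),
    ← Finset.mul_prod_erase _ _ hkj]
  simp only [if_pos rfl, if_neg (Ne.symm hjk)]
  rw [show z j * z k * (g1 (z j) * (g1 (z k) * ∏ i ∈ (Finset.univ.erase j).erase k, g1 (z i)))
      = (z j * g1 (z j)) * ((z k * g1 (z k)) * ∏ i ∈ (Finset.univ.erase j).erase k, g1 (z i))
    by ring]
  congr 2
  refine Finset.prod_congr rfl fun i hi => ?_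
  have hik : i ≠ k := Finset.ne_of_mem_erase hi
  have hij : i ≠ j := Finset.ne_of_mem_erase (Finset.mem_of_mem_erase hi)
  rw [if_neg hij, if_neg hik]

/-- second-moment factorized form, equal indices -/
lemma mom2_eq_eq (j : Fin d) (z : Fin d → ℝ) :
    z j * z j * GG z = ∏ i, (if i = j then (fun y => y ^ 2 * g1 y) else g1) (z i) := by
  rw [GG, ← Finset.mul_prod_erase Finset.univ _ (Finset.mem_univ j),
    ← Finset.mul_prod_erase Finset.univ _ (Finset.mem_univ j)]
  simp only [if_pos rfl]
  rw [← mul_assoc, show z j * z j * g1 (z j) = z j ^ 2 * g1 (z j) by ring]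
  congr 1
  refine Finset.prod_congr rfl fun i hi => ?_
  rw [if_neg (Finset.ne_of_mem_erase hi)]

lemma integrable_mom2 (j k : Fin d) : Integrable (fun z : Fin d → ℝ => z j * z k * GG z) := by
  by_cases hjk : j = k
  · subst hjk
    simp only [mom2_eq_eq j]
    exact Integrable.fintype_prod fun i => by
      by_cases h : i = j <;> simp [h, integrable_x2g1, integrable_g1]
  · simp only [mom2_eq_ne j k hjk]
    exact Integrable.fintype_prod fun i => by
      by_cases h : i = j
      · simp [h, integrable_xg1]
      · by_cases h' : i = k <;> simp [h, h', integrable_xg1, integrable_g1]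

lemma integral_mom2 (j k : Fin d) :
    (∫ z : Fin d → ℝ, z j * z k * GG z)
      = if j = k then Real.sqrt (2 * π) ^ d else 0 := by
  by_cases hjk : j = k
  · subst hjk
    simp only [mom2_eq_eq j, if_pos rfl]
    rw [MeasureTheory.integral_fintype_prod_volume_eq_prod]
    have : ∀ i : Fin d, (∫ x : ℝ, (if i = j then (fun y => y ^ 2 * g1 y) else g1) x)
        = Real.sqrt (2 * π) := by
      intro i
      by_cases h : i = j <;> simp [h, integral_x2g1, integral_g1]
    rw [Finset.prod_congr rfl fun i _ => this i]
    simp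
  · simp only [mom2_eq_ne j k hjk, if_neg hjk]
    rw [MeasureTheory.integral_fintype_prod_volume_eq_prod]
    refine Finset.prod_eq_zero (Finset.mem_univ j) ?_
    simp [integral_xg1]

end Pi
section Quad
variable {d : ℕ}

lemma quad_pt (a : Fin d → ℝ) (b : ℝ) (z : Fin d → ℝ) :
    ((∑ j, a j * z j) + b) ^ 2 * GG z
      = (∑ j, ∑ k, (a j * a k) * (z j * z k * GG z))
        + ((∑ j, (2 * b * a j) * (z j * GG z)) + b ^ 2 * GG z) := by
  have h1 : (∑ j, a j * z j) ^ 2 = ∑ j, ∑ k, (a j * a k) * (z j * z k) := by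
    rw [sq, Finset.sum_mul_sum]
    refine Finset.sum_congr rfl fun j _ => Finset.sum_congr rfl fun k _ => by ring
  rw [add_sq, add_mul, add_mul, h1]
  simp only [Finset.sum_mul, Finset.mul_sum]
  rw [add_assoc]
  congr 1
  · exact Finset.sum_congr rfl fun j _ => Finset.sum_congr rfl fun k _ => by ring
  · congr 1
    exact Finset.sum_congr rfl fun j _ => by ring

lemma integrable_quad (a : Fin d → ℝ) (b : ℝ) :
    Integrable (fun z : Fin d → ℝ => ((∑ j, a j * z j) + b) ^ 2 * GG z) := by
  have I2 : Integrable (fun z : Fin d → ℝ => ∑ j, ∑ k, (a j * a k) * (z j * z k * GG z)) :=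
    integrable_finset_sum _ fun j _ => integrable_finset_sum _
      fun k _ => (integrable_mom2 j k).const_mul _
  have I1 : Integrable (fun z : Fin d → ℝ => ∑ j, (2 * b * a j) * (z j * GG z)) :=
    integrable_finset_sum _ fun j _ => (integrable_mom1 j).const_mul _
  have I0 : Integrable (fun z : Fin d → ℝ => b ^ 2 * GG z) := integrable_GG.const_mul _
  simp only [quad_pt a b]
  exact I2.add (I1.add I0)

lemma integral_quad (a : Fin d → ℝ) (b : ℝ) :
    (∫ z : Fin d → ℝ, ((∑ j, a j * z j) + b) ^ 2 * GG z)
      = ((∑ j, a j ^ 2) + b ^ 2) * Real.sqrt (2 * π) ^ d := by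
  have I2 : Integrable (fun z : Fin d → ℝ => ∑ j, ∑ k, (a j * a k) * (z j * z k * GG z)) :=
    integrable_finset_sum _ fun j _ => integrable_finset_sum _
      fun k _ => (integrable_mom2 j k).const_mul _
  have I1 : Integrable (fun z : Fin d → ℝ => ∑ j, (2 * b * a j) * (z j * GG z)) :=
    integrable_finset_sum _ fun j _ => (integrable_mom1 j).const_mul _
  have I0 : Integrable (fun z : Fin d → ℝ => b ^ 2 * GG z) := integrable_GG.const_mul _
  have I10 : Integrable (fun z : Fin d → ℝ =>
      (∑ j, (2 * b * a j) * (z j * GG z)) + b ^ 2 * GG z) := I1.add I0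
  have E2 : (∫ z : Fin d → ℝ, ∑ j, ∑ k, (a j * a k) * (z j * z k * GG z))
      = ∑ j : Fin d, a j ^ 2 * Real.sqrt (2 * π) ^ d := by
    rw [integral_finset_sum _ (fun j _ => integrable_finset_sum _
      (fun k _ => (integrable_mom2 j k).const_mul _))]
    refine Finset.sum_congr rfl fun j _ => ?_
    rw [integral_finset_sum _ (fun k _ => (integrable_mom2 j k).const_mul _)]
    have : ∀ k : Fin d, (∫ z : Fin d → ℝ, (a j * a k) * (z j * z k * GG z))
        = if j = k then a j * a k * Real.sqrt (2 * π) ^ d else 0 := by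
      intro k
      rw [integral_const_mul, integral_mom2]
      by_cases h : j = k <;> simp [h]
    rw [Finset.sum_congr rfl fun k _ => this k, Finset.sum_ite_eq Finset.univ j
      (fun k => a j * a k * Real.sqrt (2 * π) ^ d)]
    simp [sq, mul_assoc]
  have E1 : (∫ z : Fin d → ℝ, ∑ j, (2 * b * a j) * (z j * GG z)) = 0 := by
    rw [integral_finset_sum _ (fun j _ => (integrable_mom1 j).const_mul _)]
    refine Finset.sum_eq_zero fun j _ => ?_
    rw [integral_const_mul, integral_mom1, mul_zero]
  simp only [quad_pt a b]
  rw [integral_add I2 I10, integral_add I1 I0, E2, E1, integral_const_mul, integral_GG]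
  rw [add_mul, Finset.sum_mul]
  ring

lemma integral_master (C : Matrix (Fin d) (Fin d) ℝ) (c : Fin d → ℝ) :
    (∫ z : Fin d → ℝ, (∑ i, ((C.mulVec z) i + c i) ^ 2) * GG z)
      = ((∑ i, ∑ j, C i j ^ 2) + ∑ i, c i ^ 2) * Real.sqrt (2 * π) ^ d := by
  have hmv : ∀ (z : Fin d → ℝ) (i : Fin d), (C.mulVec z) i = ∑ j, C i j * z j := by
    intro z i
    simp [Matrix.mulVec, dotProduct]
  simp only [hmv, Finset.sum_mul]
  rw [integral_finset_sum _ (fun i _ => integrable_quad (fun j => C i j) (c i))]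
  simp only [integral_quad]
  rw [← Finset.sum_mul, ← Finset.sum_add_distrib]

end Quad
section helpers

lemma sqrt_pow' (x : ℝ) (hx : 0 ≤ x) (n : ℕ) : Real.sqrt (x ^ n) = Real.sqrt x ^ n := by
  symm
  rw [← Real.sqrt_sq (pow_nonneg (Real.sqrt_nonneg x) n)]
  congr 1
  rw [← pow_mul, mul_comm n 2, pow_mul, Real.sq_sqrt hx]

lemma GG_exp {d : ℕ} (w : Fin d → ℝ) :
    Real.exp (-(1/2 : ℝ) * ∑ i, w i ^ 2) = GG w := by
  rw [GG, Finset.mul_sum, Real.exp_sum]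
  rfl

end helpers

/-- The affine optimal coupling attains the Gelbrich bound:
`E‖T X + t − X‖² = ‖m₂ − m₁‖² + Tr(Σ₁ + Σ₂ − 2(Σ₁^{1/2} Σ₂ Σ₁^{1/2})^{1/2})`. -/
theorem affine_coupling_attains_gelbrich {d : ℕ}
    (S₁ S₂ : Matrix (Fin d) (Fin d) ℝ)
    (hS₁ : S₁.PosDef) (hS₂ : S₂.PosDef)
    (m₁ m₂ : EuclideanSpace ℝ (Fin d))
    (T : Matrix (Fin d) (Fin d) ℝ)
    (hT : T = (msqrt S₁)⁻¹ * msqrt (msqrt S₁ * S₂ * msqrt S₁) * (msqrt S₁)⁻¹)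
    (t : EuclideanSpace ℝ (Fin d))
    (ht : t = m₂ - toEuc (T.mulVec m₁)) :
    ∫ x, ‖toEuc (T.mulVec x) + t - x‖ ^ 2 ∂(gaussian m₁ S₁)
      = ‖m₂ - m₁‖ ^ 2 +
        (S₁ + S₂ - (2 : ℝ) • msqrt (msqrt S₁ * S₂ * msqrt S₁)).trace := by
  classical
  have hS₁sd : S₁.PosSemidef := hS₁.posSemidef
  have hRdef : msqrt S₁ = hS₁sd.sqrt := by rw [msqrt, dif_pos hS₁sd]; rfl
  set R : Matrix (Fin d) (Fin d) ℝ := hS₁sd.sqrt with hRset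
  have hRps : R.PosSemidef := hS₁sd.posSemidef_sqrt
  have hRh : Rᵀ = R := by
    rw [← Matrix.conjTranspose_eq_transpose_of_trivial]
    exact hRps.1
  have hRR : R * R = S₁ := hS₁sd.sqrt_mul_self
  have hMps : (R * S₂ * R).PosSemidef := by
    have h := hS₂.posSemidef.mul_mul_conjTranspose_same R
    rwa [Matrix.conjTranspose_eq_transpose_of_trivial, hRh] at h
  have hBdef : msqrt (msqrt S₁ * S₂ * msqrt S₁) = hMps.sqrt := by
    rw [hRdef, msqrt, dif_pos hMps]; rfl
  set B : Matrix (Fin d) (Fin d) ℝ := hMps.sqrt with hBset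
  have hBps : B.PosSemidef := hMps.posSemidef_sqrt
  have hBh : Bᵀ = B := by
    rw [← Matrix.conjTranspose_eq_transpose_of_trivial]
    exact hBps.1
  have hBB : B * B = R * S₂ * R := hMps.sqrt_mul_self
  have hdetS₁ : 0 < S₁.det := hS₁.det_pos
  have hdet2 : R.det * R.det = S₁.det := by rw [← Matrix.det_mul, hRR]
  have hdetR : R.det ≠ 0 := by
    intro h
    rw [h, mul_zero] at hdet2
    exact hdetS₁.ne' hdet2.symm
  have hRu : IsUnit R.det := isUnit_iff_ne_zero.mpr hdetR
  have hinv1 : R⁻¹ * R = 1 := Matrix.nonsing_inv_mul R hRu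
  have hinv2 : R * R⁻¹ = 1 := Matrix.mul_nonsing_inv R hRu
  have hcan1 : ∀ X : Matrix (Fin d) (Fin d) ℝ, R⁻¹ * (R * X) = X := fun X => by
    rw [← Matrix.mul_assoc, hinv1, Matrix.one_mul]
  have hcan2 : ∀ X : Matrix (Fin d) (Fin d) ℝ, R * (R⁻¹ * X) = X := fun X => by
    rw [← Matrix.mul_assoc, hinv2, Matrix.one_mul]
  have hTR : T = R⁻¹ * B * R⁻¹ := by rw [hT, hBdef, hRdef]
  have hTh : Tᵀ = T := by
    rw [hTR]
    simp only [Matrix.transpose_mul, Matrix.transpose_nonsing_inv, hRh, hBh, Matrix.mul_assoc]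
  set Cm : Matrix (Fin d) (Fin d) ℝ := (T - 1) * R with hCm
  have hCt : Cmᵀ = R * (T - 1) := by
    rw [hCm, Matrix.transpose_mul, hRh, Matrix.transpose_sub, hTh, Matrix.transpose_one]
  have hCC : Cm * Cmᵀ = (T - 1) * S₁ * (T - 1) := by
    rw [hCt, hCm, Matrix.mul_assoc (T - 1) R (R * (T - 1)), ← Matrix.mul_assoc R R (T - 1), hRR,
      ← Matrix.mul_assoc]
  have hTS₁T : T * S₁ * T = S₂ := by
    rw [hTR, ← hRR]
    simp only [Matrix.mul_assoc]
    rw [hcan1, hcan2, ← Matrix.mul_assoc B B, hBB]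
    simp only [Matrix.mul_assoc]
    rw [hcan1, hinv2, Matrix.mul_one]
  have htrTS₁ : (T * S₁).trace = B.trace := by
    rw [hTR, ← hRR]
    simp only [Matrix.mul_assoc]
    rw [hcan1, ← Matrix.mul_assoc, Matrix.trace_mul_comm, hcan2]
  have htrS₁T : (S₁ * T).trace = B.trace := by rw [Matrix.trace_mul_comm]; exact htrTS₁
  have htraceC : (Cm * Cmᵀ).trace = S₁.trace + S₂.trace - 2 * B.trace := by
    have expand : (T - 1) * S₁ * (T - 1) = T * S₁ * T - T * S₁ - (S₁ * T - S₁) := by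
      noncomm_ring
    rw [hCC, expand, Matrix.trace_sub, Matrix.trace_sub, Matrix.trace_sub, hTS₁T, htrTS₁, htrS₁T]
    ring
  have hRHStr : (S₁ + S₂ - (2 : ℝ) • B).trace = S₁.trace + S₂.trace - 2 * B.trace := by
    rw [Matrix.trace_sub, Matrix.trace_add, Matrix.trace_smul, smul_eq_mul]
  have htrsum : (∑ i, ∑ j, Cm i j ^ 2) = (Cm * Cmᵀ).trace := by
    simp [Matrix.trace, Matrix.diag, Matrix.mul_apply, Matrix.transpose_apply, sq]
  -- norms
  have hnorm : ∀ v : EuclideanSpace ℝ (Fin d), ‖v‖ ^ 2 = ∑ i, v i ^ 2 := by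
    intro v
    rw [EuclideanSpace.norm_eq, Real.sq_sqrt (Finset.sum_nonneg fun i _ => sq_nonneg _)]
    simp [sq_abs]
  set cv : Fin d → ℝ := fun i => m₂ i - m₁ i with hcv
  have hnormm : ‖m₂ - m₁‖ ^ 2 = ∑ i, cv i ^ 2 := by
    rw [hnorm]
    refine Finset.sum_congr rfl fun i _ => ?_
    congr 1
  -- measure-theoretic reduction
  set p : EuclideanSpace ℝ (Fin d) → ℝ := gaussianPdf m₁ S₁ with hp
  have hp0 : ∀ x, 0 ≤ p x := fun x => mul_nonneg (Real.sqrt_nonneg _) (Real.exp_pos _).le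
  have hpPimeas : Measurable (fun y : Fin d → ℝ => p (toEuc y)) := by
    show Measurable fun y : Fin d → ℝ =>
      Real.sqrt (((2 * Real.pi) ^ (Fintype.card (Fin d)) * S₁.det)⁻¹) *
        Real.exp (-(1 / 2) * ∑ i, ∑ j, (y i - m₁ i) * S₁⁻¹ i j * (y j - m₁ j))
    fun_prop
  have hpmeas : Measurable fun x : EuclideanSpace ℝ (Fin d) => (p x).toNNReal := by
    have h2 : Measurable (fun x : EuclideanSpace ℝ (Fin d) => p x) :=
      hpPimeas.comp (MeasurableEquiv.toLp 2 (Fin d → ℝ)).symm.measurable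
    exact measurable_real_toNNReal.comp h2
  set F : EuclideanSpace ℝ (Fin d) → ℝ := fun x => ‖toEuc (T.mulVec x) + t - x‖ ^ 2 with hF
  have step1 : ∫ x, F x ∂(gaussian m₁ S₁) = ∫ x, p x * F x := by
    rw [gaussian]
    rw [show (fun x : EuclideanSpace ℝ (Fin d) => ENNReal.ofReal (gaussianPdf m₁ S₁ x))
        = (fun x => ((p x).toNNReal : ENNReal)) from rfl]
    rw [integral_withDensity_eq_integral_smul hpmeas]
    congr 1
    funext x
    rw [NNReal.smul_def, Real.coe_toNNReal _ (hp0 x), smul_eq_mul]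
  have hVPsymm : MeasureTheory.MeasurePreserving
      (MeasurableEquiv.toLp 2 (Fin d → ℝ)) volume volume :=
    MeasureTheory.MeasurePreserving.symm _
      (EuclideanSpace.volume_preserving_symm_measurableEquiv_toLp (Fin d))
  have step2 : ∫ x, p x * F x = ∫ y : Fin d → ℝ, p (toEuc y) * F (toEuc y) :=
    (hVPsymm.integral_comp' (fun x => p x * F x)).symm
  -- pointwise formula on Pi space
  set q : (Fin d → ℝ) → ℝ := fun y =>
    Real.sqrt (((2 * Real.pi) ^ d * S₁.det)⁻¹) *
      Real.exp (-(1/2 : ℝ) * ∑ i, ∑ j, (y i - m₁ i) * S₁⁻¹ i j * (y j - m₁ j)) *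
      (∑ i, ((∑ j, (T - 1) i j * (y j - m₁ j)) + cv i) ^ 2) with hqdef
  have hTsum : ∀ (v : Fin d → ℝ) (i : Fin d),
      ∑ j, (T - 1) i j * v j = (∑ j, T i j * v j) - v i := by
    intro v i
    simp only [Matrix.sub_apply, Matrix.one_apply, sub_mul]
    rw [Finset.sum_sub_distrib]
    congr 1
    simp [ite_mul]
  have step3 : ∀ y : Fin d → ℝ, p (toEuc y) * F (toEuc y) = q y := by
    intro y
    have hFy : F (toEuc y) = ∑ i, ((∑ j, (T - 1) i j * (y j - m₁ j)) + cv i) ^ 2 := by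
      show ‖toEuc (T.mulVec (toEuc y)) + t - toEuc y‖ ^ 2 = _
      rw [hnorm]
      refine Finset.sum_congr rfl fun i _ => ?_
      have hcoord : (toEuc (T.mulVec (toEuc y)) + t - toEuc y) i
          = (∑ j, T i j * y j) + (m₂ i - ∑ j, T i j * m₁ j) - y i := by
        rw [ht]
        show (T.mulVec y) i + (m₂ i - (T.mulVec m₁) i) - y i
          = (∑ j, T i j * y j) + (m₂ i - ∑ j, T i j * m₁ j) - y i
        rfl
      rw [hcoord, hTsum]
      rw [show ∑ j, T i j * (y j - m₁ j) = (∑ j, T i j * y j) - ∑ j, T i j * m₁ j by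
        rw [← Finset.sum_sub_distrib]; exact Finset.sum_congr rfl fun j _ => by ring]
      rw [hcv]
      ring
    rw [hFy, hqdef]
    show p (toEuc y) * _ = _
    rw [hp]
    show gaussianPdf m₁ S₁ (toEuc y) * _ = _
    rw [gaussianPdf]
    simp only [Fintype.card_fin]
    rfl
  -- shift
  set mv : Fin d → ℝ := fun i => m₁ i with hmv
  have step4 : ∫ y : Fin d → ℝ, q y = ∫ z : Fin d → ℝ, q (mv + z) :=
    (MeasureTheory.integral_add_left_eq_self q mv).symm
  set r : (Fin d → ℝ) → ℝ := fun z =>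
    Real.sqrt (((2 * Real.pi) ^ d * S₁.det)⁻¹) *
      Real.exp (-(1/2 : ℝ) * ∑ i, ∑ j, z i * S₁⁻¹ i j * z j) *
      (∑ i, ((∑ j, (T - 1) i j * z j) + cv i) ^ 2) with hrdef
  have step5 : ∀ z : Fin d → ℝ, q (mv + z) = r z := by
    intro z
    rw [hqdef, hrdef]
    simp only [Pi.add_apply, hmv]
    norm_num
  have hrcont : Continuous r := by
    rw [hrdef]
    fun_prop
  -- linear change of variables
  have hmap := Real.map_matrix_volume_pi_eq_smul_volume_pi (M := R) hdetR
  have step6 : ∫ z : Fin d → ℝ, r z = |R.det| * ∫ w : Fin d → ℝ, r (R.mulVec w) := by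
    have hL : Measurable (Matrix.toLin' R) :=
      (LinearMap.continuous_of_finiteDimensional _).measurable
    have h1 : ∫ z, r z ∂(MeasureTheory.Measure.map (Matrix.toLin' R) volume)
        = ∫ w : Fin d → ℝ, r ((Matrix.toLin' R) w) :=
      MeasureTheory.integral_map hL.aemeasurable hrcont.aestronglyMeasurable
    rw [hmap, MeasureTheory.integral_smul_measure, ENNReal.toReal_ofReal (abs_nonneg _),
      abs_inv] at h1
    have h2 : ∀ w, (Matrix.toLin' R) w = R.mulVec w := fun w => Matrix.toLin'_apply R w
    simp only [h2] at h1
    rw [← h1, smul_eq_mul, ← mul_assoc, mul_inv_cancel₀ (abs_ne_zero.mpr hdetR), one_mul]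
  -- pointwise after substitution
  have hquad : ∀ w : Fin d → ℝ,
      (∑ i, ∑ j, (R.mulVec w) i * S₁⁻¹ i j * (R.mulVec w) j) = ∑ i, w i ^ 2 := by
    intro w
    have hdp : ∀ (M : Matrix (Fin d) (Fin d) ℝ) (v : Fin d → ℝ),
        v ⬝ᵥ M.mulVec v = ∑ i, ∑ j, v i * M i j * v j := by
      intro M v
      simp [dotProduct, Matrix.mulVec, Finset.mul_sum, mul_assoc]
    rw [← hdp]
    rw [Matrix.mulVec_mulVec, dotProduct_mulVec]
    have hvm : R.mulVec w = w ᵥ* R := by rw [← Matrix.mulVec_transpose, hRh]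
    rw [hvm, Matrix.vecMul_vecMul]
    have hone : R * (S₁⁻¹ * R) = 1 := by
      rw [← hRR, Matrix.mul_inv_rev, Matrix.mul_assoc R⁻¹ R⁻¹ R, hinv1, Matrix.mul_one, hinv2]
    rw [hone, Matrix.vecMul_one]
    simp [dotProduct, sq]
  have hlin : ∀ (w : Fin d → ℝ) (i : Fin d),
      (∑ j, (T - 1) i j * (R.mulVec w) j) = (Cm.mulVec w) i := by
    intro w i
    have h0 : (∑ j, (T - 1) i j * (R.mulVec w) j) = ((T - 1).mulVec (R.mulVec w)) i := rfl
    rw [h0, Matrix.mulVec_mulVec]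
  have step7 : ∀ w : Fin d → ℝ, r (R.mulVec w)
      = Real.sqrt (((2 * Real.pi) ^ d * S₁.det)⁻¹) *
          ((∑ i, ((Cm.mulVec w) i + cv i) ^ 2) * GG w) := by
    intro w
    rw [hrdef]
    simp only [hlin w]
    rw [hquad, GG_exp]
    ring
  have step8 : ∫ w : Fin d → ℝ, r (R.mulVec w)
      = Real.sqrt (((2 * Real.pi) ^ d * S₁.det)⁻¹) *
          (((∑ i, ∑ j, Cm i j ^ 2) + ∑ i, cv i ^ 2) * Real.sqrt (2 * Real.pi) ^ d) := by
    simp only [step7]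
    rw [MeasureTheory.integral_const_mul, integral_master Cm cv]
  have habs : |R.det| = Real.sqrt S₁.det := by
    rw [← hdet2, Real.sqrt_mul_self_eq_abs]
  have hconst : |R.det| * Real.sqrt (((2 * Real.pi) ^ d * S₁.det)⁻¹) *
      Real.sqrt (2 * Real.pi) ^ d = 1 := by
    rw [habs, Real.sqrt_inv, ← sqrt_pow' (2 * Real.pi) (by positivity) d,
      Real.sqrt_mul (by positivity) S₁.det]
    have h1 : 0 < Real.sqrt ((2 * Real.pi) ^ d) :=
      Real.sqrt_pos.mpr (by positivity)
    have h2 : 0 < Real.sqrt S₁.det := Real.sqrt_pos.mpr hdetS₁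
    field_simp
  rw [step1, step2]
  simp only [step3]
  rw [step4]
  simp only [step5]
  rw [step6, step8, hBdef, hRHStr, htrsum, htraceC, hnormm]
  linear_combination ((S₁.trace + S₂.trace - 2 * B.trace) + ∑ i, cv i ^ 2) * hconst
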